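/- The composition of constructible maps is constructible: if f : P → Q and g : Q → R are constructible maps of finite posets, then g ∘ f : P → R is a constructible map. -/

import Mathlib

/-- `a` is a maximal element of the subposet `A`. -/
def IsMaxIn {P : Type*} [PartialOrder P] (A : Set P) (a : P) : Prop :=
  a ∈ A ∧ ∀ x ∈ A, a ≤ x → x = a

/-- `b` covers `a` within the subposet `A`: `a < b` and no element of `A` lies
strictly between them. -/
def CoversIn {P : Type*} [PartialOrder P] (A : Set P) (a b : P) : Prop :=
  a ∈ A ∧ b ∈ A ∧ a < b ∧ ∀ x ∈ A, a < x → ¬x < b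

/-- The subposet `A` is of codimension one in the subposet `B`: every maximal element
of `A` is covered (within `B`) by a maximal element of `B`. -/
def CodimOneIn {P : Type*} [PartialOrder P] (A B : Set P) : Prop :=
  ∀ a : P, IsMaxIn A a → ∃ b : P, IsMaxIn B b ∧ CoversIn B a b

/-- The subposet `A` is of pure codimension one in the subposet `B`: it is of
codimension one, and no maximal element of `A` is covered by a non-maximal element
of `B`. -/
def PureCodimOneIn {P : Type*} [PartialOrder P] (A B : Set P) : Prop :=
  CodimOneIn A B ∧ ∀ a : P, IsMaxIn A a → ∀ b : P, CoversIn B a b → IsMaxIn B b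

/-- `A` is a closed subposet of the subposet `B`. -/
def IsClosedSubposet {P : Type*} [PartialOrder P] (B A : Set P) : Prop :=
  A ⊆ B ∧ ∀ a ∈ A, ∀ x ∈ B, x ≤ a → x ∈ A

/-- A (sub)poset is constructible if either it has a greatest element, or it is a union
`Q ∪ R` of closed subposets such that `Q ∩ R` is of codimension one both in `Q` and in
`R`, and each of `Q`, `R` and `Q ∩ R` is constructible. -/
inductive PosetConstructible {P : Type*} [PartialOrder P] : Set P → Prop where
  | cone {A : Set P} {g : P} (hg : g ∈ A) (hgreatest : ∀ x ∈ A, x ≤ g) :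
      PosetConstructible A
  | step {Q R : Set P} (hQ : IsClosedSubposet (Q ∪ R) Q) (hR : IsClosedSubposet (Q ∪ R) R)
      (hcQ : CodimOneIn (Q ∩ R) Q) (hcR : CodimOneIn (Q ∩ R) R)
      (cQ : PosetConstructible Q) (cR : PosetConstructible R)
      (cQR : PosetConstructible (Q ∩ R)) : PosetConstructible (Q ∪ R)

/-- A monotone map `f : P → Q` is a filtration map if `f⁻¹(⌊q⌋ \ {q})` is of
codimension one in `f⁻¹(⌊q⌋)` for every `q`. -/
def IsFiltrationMap {P Q : Type*} [PartialOrder P] [PartialOrder Q] (f : P → Q) : Prop :=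
  ∀ q : Q, CodimOneIn (f ⁻¹' {y | y < q}) (f ⁻¹' {y | y ≤ q})

/-- A monotone map `f : P → Q` is a pure filtration map if `f⁻¹(⌊q⌋ \ {q})` is of
pure codimension one in `f⁻¹(⌊q⌋)` for every `q`. -/
def IsPureFiltrationMap {P Q : Type*} [PartialOrder P] [PartialOrder Q] (f : P → Q) :
    Prop :=
  ∀ q : Q, PureCodimOneIn (f ⁻¹' {y | y < q}) (f ⁻¹' {y | y ≤ q})

/-- A monotone map is constructible if it is a filtration map and every `f⁻¹(⌊q⌋)` is
constructible. -/
def IsConstructibleMap {P Q : Type*} [PartialOrder P] [PartialOrder Q] (f : P → Q) :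
    Prop :=
  IsFiltrationMap f ∧ ∀ q : Q, PosetConstructible (f ⁻¹' {y | y ≤ q})


section Aux

variable {P Q : Type*} [PartialOrder P] [PartialOrder Q]

/-- Key lemma: preimages under a filtration map preserve the codimension-one
relation between downward-closed subsets of the target. -/
lemma codimOneIn_preimage [Finite P] [Finite Q]
    {f : P → Q} (hf : Monotone f) (hfil : IsFiltrationMap f)
    {U V : Set Q} (hU : ∀ ⦃a b : Q⦄, a ∈ U → b ≤ a → b ∈ U)
    (hV : ∀ ⦃a b : Q⦄, a ∈ V → b ≤ a → b ∈ V)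
    (hUV : CodimOneIn U V) : CodimOneIn (f ⁻¹' U) (f ⁻¹' V) := by
  rintro a ⟨haU, hamax⟩
  -- `f a` is maximal in `U`
  have humax : IsMaxIn U (f a) := by
    obtain ⟨m, hm, hmmax⟩ := Set.Finite.exists_maximalFor id {x ∈ U | f a ≤ x}
      (Set.toFinite _) ⟨f a, haU, le_refl _⟩
    by_cases hmu : m = f a
    · subst hmu
      exact ⟨hm.1, fun x hx hux => le_antisymm (hmmax ⟨hx, hux⟩ hux) hux⟩
    · exfalso
      have hum : f a < m := lt_of_le_of_ne hm.2 (fun h => hmu h.symm)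
      have hamax' : IsMaxIn (f ⁻¹' {y | y < m}) a :=
        ⟨hum, fun x hx hax => hamax x (hU hm.1 (le_of_lt hx)) hax⟩
      obtain ⟨b, hbmax, hbcov⟩ := hfil m a hamax'
      have hab : a < b := hbcov.2.2.1
      exact absurd (hamax b (hU hm.1 hbmax.1) hab.le) (ne_of_gt hab)
  obtain ⟨v, hvmax, hvcov⟩ := hUV (f a) humax
  have huv : f a < v := hvcov.2.2.1
  -- `a` is maximal in `f⁻¹(⌊v⌋ \ {v})`
  have hamax2 : IsMaxIn (f ⁻¹' {y | y < v}) a := by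
    refine ⟨huv, fun x hx hax => ?_⟩
    have h1 : f a ≤ f x := hf hax
    rcases eq_or_lt_of_le h1 with he | hl
    · exact hamax x (show f x ∈ U from he ▸ haU) hax
    · exact absurd hx (hvcov.2.2.2 (f x) (hV hvcov.2.1 (le_of_lt hx)) hl)
  obtain ⟨b, hbmax, hbcov⟩ := hfil v a hamax2
  have hab : a < b := hbcov.2.2.1
  have hfb : f b = v := by
    have h1 : f a ≤ f b := hf hab.le
    have h2 : f b ≤ v := hbmax.1
    rcases eq_or_lt_of_le h1 with he | hl
    · exact absurd (hamax b (show f b ∈ U from he ▸ haU) hab.le) (ne_of_gt hab)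
    · rcases eq_or_lt_of_le h2 with he2 | hl2
      · exact he2
      · exact absurd hl2 (hvcov.2.2.2 (f b) (hV hvcov.2.1 h2) hl)
  refine ⟨b, ⟨hV hvmax.1 hbmax.1, fun x hx hbx => ?_⟩,
    hvcov.1, hV hvmax.1 hbmax.1, hab, fun x hx hax hxb => ?_⟩
  · have hvfx : v ≤ f x := hfb ▸ hf hbx
    have hxv : f x = v := hvmax.2 (f x) hx hvfx
    exact hbmax.2 x (show f x ≤ v from hxv.le) hbx
  · -- no element of `f⁻¹ V` strictly between `a` and `b`
    have h1 : f a ≤ f x := hf hax.le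
    rcases eq_or_lt_of_le h1 with he | hl
    · exact absurd (hamax x (show f x ∈ U from he ▸ haU) hax.le) (ne_of_gt hax)
    · have hfx : f x ≤ v := hfb ▸ hf hxb.le
      have hnlt : ¬ f x < v := hvcov.2.2.2 (f x) hx hl
      exact hbcov.2.2.2 x (show f x ≤ v from hfx) hax hxb

/-- Preimage of a constructible downward-closed set under a constructible map. -/
lemma posetConstructible_preimage [Finite P] [Finite Q]
    {f : P → Q} (hf : Monotone f) (hfil : IsFiltrationMap f)
    (hfib : ∀ q : Q, PosetConstructible (f ⁻¹' {y | y ≤ q}))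
    (T : Set Q) (hT : PosetConstructible T)
    (hdown : ∀ ⦃a b : Q⦄, a ∈ T → b ≤ a → b ∈ T) :
    PosetConstructible (f ⁻¹' T) := by
  induction hT with
  | @cone A g0 hg hgreatest =>
      have : A = {y | y ≤ g0} := Set.ext fun y =>
        ⟨fun hy => hgreatest y hy, fun hy => hdown hg hy⟩
      rw [this]
      exact hfib g0
  | @step Q' R' hQ hR hcQ hcR cQ cR cQR ihQ ihR ihQR =>
      have hdQ : ∀ ⦃a b : Q⦄, a ∈ Q' → b ≤ a → b ∈ Q' := fun a b ha hba =>
        hQ.2 a ha b (hdown (Set.mem_union_left _ ha) hba) hba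
      have hdR : ∀ ⦃a b : Q⦄, a ∈ R' → b ≤ a → b ∈ R' := fun a b ha hba =>
        hR.2 a ha b (hdown (Set.mem_union_right _ ha) hba) hba
      have hdQR : ∀ ⦃a b : Q⦄, a ∈ Q' ∩ R' → b ≤ a → b ∈ Q' ∩ R' := fun a b ha hba =>
        ⟨hdQ ha.1 hba, hdR ha.2 hba⟩
      rw [Set.preimage_union]
      refine PosetConstructible.step ?_ ?_ ?_ ?_ (ihQ hdQ) (ihR hdR) ?_
      · exact ⟨Set.subset_union_left, fun a ha x _ hxa => hdQ ha (hf hxa)⟩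
      · exact ⟨Set.subset_union_right, fun a ha x _ hxa => hdR ha (hf hxa)⟩
      · rw [← Set.preimage_inter]
        exact codimOneIn_preimage hf hfil hdQR hdQ hcQ
      · rw [← Set.preimage_inter]
        exact codimOneIn_preimage hf hfil hdQR hdR hcR
      · rw [← Set.preimage_inter]
        exact ihQR hdQR

end Aux


/-- The composition of constructible maps is a constructible map. -/
theorem constructible_map_composition {P Q R : Type*}
    [PartialOrder P] [PartialOrder Q] [PartialOrder R] [Finite P] [Finite Q] [Finite R]
    (f : P → Q) (g : Q → R) (hf : Monotone f) (hg : Monotone g)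
    (hfc : IsConstructibleMap f) (hgc : IsConstructibleMap g) :
    IsConstructibleMap (g ∘ f) := by
  constructor
  · intro r
    have hU : ∀ ⦃a b : Q⦄, a ∈ g ⁻¹' {y | y < r} → b ≤ a → b ∈ g ⁻¹' {y | y < r} :=
      fun a b ha hba => lt_of_le_of_lt (hg hba) ha
    have hV : ∀ ⦃a b : Q⦄, a ∈ g ⁻¹' {y | y ≤ r} → b ≤ a → b ∈ g ⁻¹' {y | y ≤ r} :=
      fun a b ha hba => le_trans (hg hba) ha
    exact codimOneIn_preimage hf hfc.1 hU hV (hgc.1 r)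
  · intro r
    exact posetConstructible_preimage hf hfc.1 hfc.2 (g ⁻¹' {y | y ≤ r}) (hgc.2 r)
      (fun a b ha hba => le_trans (hg hba) ha)
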